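/- arXiv:2309.06198 — 2 statements merged into one kernel-verified Lean document; each statement's English description precedes it below -/
import Mathlib

section
/- With Q = ℤv₁ ⊕ ℤv₂, ε the standard bimultiplicative 2-cocycle, σ the swap automorphism, and η any admissible sign function, one has for all integers m,n: η(mv₁+nv₂)·η(mv₂+nv₁) = (−1)^{m²−n²}. -/
/-- The standard bimultiplicative 2-cocycle on `Q = ℤv₁ ⊕ ℤv₂` (realized as `ℤ × ℤ`),
determined by `ε(v₁,v₁) = ε(v₂,v₂) = ε(v₂,v₁) = −1` and `ε(v₁,v₂) = 1`. -/
def epsStd (α β : ℤ × ℤ) : ℤˣ :=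
  (-1) ^ (α.1 * β.1 + α.2 * β.2 + α.2 * β.1)

/-- The swap automorphism `σ(v₁) = v₂`, `σ(v₂) = v₁` of `Q = ℤ × ℤ`. -/
def swapAut (α : ℤ × ℤ) : ℤ × ℤ := (α.2, α.1)

/-- For any admissible sign function `η` (i.e. `η : Q → {±1}` with
`η(α)η(β)ε(α,β) = η(α+β)ε(σ(α),σ(β))` and `η(α) = 1` whenever `σ(α) = α`), one has
`η(mv₁+nv₂)·η(mv₂+nv₁) = (−1)^(m²−n²)` for all integers `m, n`. -/
theorem stmt1 (η : ℤ × ℤ → ℤˣ)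
    (hη : ∀ α β : ℤ × ℤ, η α * η β * epsStd α β = η (α + β) * epsStd (swapAut α) (swapAut β))
    (hfix : ∀ α : ℤ × ℤ, swapAut α = α → η α = 1) :
    ∀ m n : ℤ, η (m, n) * η (n, m) = (-1) ^ (m ^ 2 - n ^ 2) := by
  intro m n
  have h := hη (m, n) (n, m)
  have hfixed : η ((m, n) + (n, m)) = 1 := by
    apply hfix
    simp [swapAut, Prod.ext_iff, add_comm]
  rw [hfixed, one_mul] at h
  have h2 : η (m, n) * η (n, m)
      = epsStd (swapAut (m, n)) (swapAut (n, m)) * (epsStd (m, n) (n, m))⁻¹ :=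
    eq_mul_inv_of_mul_eq h
  rw [h2]
  simp only [epsStd, swapAut]
  rw [← zpow_sub]
  ring_nf
end

section
/- With Q = ℤv₁ ⊕ ℤv₂, ε the standard bimultiplicative 2-cocycle, σ the swap automorphism, and η any admissible sign function, let σ̂ be the ℂ-linear automorphism of the group algebra ℂ[Q] determined on the canonical basis by σ̂(e^α) = η(α)⁻¹ e^{σ(α)}. Then σ̂ has order exactly 4: σ̂⁴ = id but σ̂² ≠ id (indeed σ̂²(e^α) = (−1)^{m²−n²} e^α for α = mv₁+nv₂). -/
/-- With `Q = ℤv₁ ⊕ ℤv₂`, `ε` the standard cocycle, `σ` the swap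
automorphism and `η` any admissible sign function, the ℂ-linear endomorphism `T = σ̂`
of the group algebra `ℂ[Q]` determined on the canonical basis by
`σ̂(e^α) = η(α)⁻¹ e^{σ(α)}` has order exactly 4: `T⁴ = 1` but `T² ≠ 1`; indeed
`T²(e^α) = (−1)^(m²−n²) e^α` for `α = mv₁ + nv₂`. -/
theorem stmt4 (η : ℤ × ℤ → ℤˣ)
    (hη : ∀ α β : ℤ × ℤ, η α * η β * epsStd α β = η (α + β) * epsStd (swapAut α) (swapAut β))
    (hfix : ∀ α : ℤ × ℤ, swapAut α = α → η α = 1)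
    (T : Module.End ℂ (AddMonoidAlgebra ℂ (ℤ × ℤ)))
    (hT : ∀ α : ℤ × ℤ, T (AddMonoidAlgebra.single α 1) =
      ((((η α)⁻¹ : ℤˣ) : ℤ) : ℂ) • AddMonoidAlgebra.single (swapAut α) 1) :
    T ^ 4 = 1 ∧ T ^ 2 ≠ 1 ∧
      ∀ m n : ℤ, (T ^ 2) (AddMonoidAlgebra.single ((m, n) : ℤ × ℤ) (1 : ℂ)) =
        ((((-1 : ℤˣ) ^ (m ^ 2 - n ^ 2) : ℤˣ) : ℤ) : ℂ) •
          AddMonoidAlgebra.single ((m, n) : ℤ × ℤ) (1 : ℂ) := by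
  have key : ∀ α : ℤ × ℤ, η α * η (swapAut α) = (-1 : ℤˣ) ^ (α.1 ^ 2 - α.2 ^ 2) := by
    intro α
    have h1 := hη α (swapAut α)
    have hfx : η (α + swapAut α) = 1 := by
      apply hfix; simp [swapAut, Prod.ext_iff, add_comm]
    rw [hfx, one_mul] at h1
    have hss : swapAut (swapAut α) = α := by simp [swapAut]
    rw [hss] at h1
    have h2 : η α * η (swapAut α) = epsStd (swapAut α) α * (epsStd α (swapAut α))⁻¹ := by
      rw [eq_mul_inv_iff_mul_eq]; exact h1
    rw [h2]
    unfold epsStd swapAut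
    rw [← zpow_sub]
    congr 1
    ring
  have hT2 : ∀ α : ℤ × ℤ, (T ^ 2) (AddMonoidAlgebra.single α (1 : ℂ)) =
      ((((-1 : ℤˣ) ^ (α.1 ^ 2 - α.2 ^ 2) : ℤˣ) : ℤ) : ℂ) • AddMonoidAlgebra.single α 1 := by
    intro α
    have hss : swapAut (swapAut α) = α := by simp [swapAut]
    rw [pow_two, Module.End.mul_apply, hT, map_smul, hT, hss, smul_smul,
      Int.units_inv_eq_self, Int.units_inv_eq_self, ← Int.cast_mul, ← Units.val_mul, key α]
  have hu : ∀ u : ℤˣ, ((u : ℤ) : ℂ) * ((u : ℤ) : ℂ) = 1 := by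
    intro u
    rw [← Int.cast_mul, ← Units.val_mul, Int.units_mul_self]
    norm_num
  refine ⟨?_, ?_, fun m n => hT2 (m, n)⟩
  · apply AddMonoidAlgebra.lhom_ext'
    intro a
    apply LinearMap.ext
    intro b
    simp only [LinearMap.comp_apply, AddMonoidAlgebra.lsingle_apply]
    have hb : (AddMonoidAlgebra.single a b : AddMonoidAlgebra ℂ (ℤ × ℤ)) =
        b • AddMonoidAlgebra.single a 1 := by
      rw [AddMonoidAlgebra.smul_single', mul_one]
    have h4 : T ^ 4 = T ^ 2 * T ^ 2 := by rw [← pow_add]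
    have hmain : (T ^ 4) (AddMonoidAlgebra.single a (1 : ℂ)) = AddMonoidAlgebra.single a 1 := by
      rw [h4, Module.End.mul_apply, hT2, map_smul, hT2, smul_smul, hu, one_smul]
    rw [hb, map_smul, map_smul]
    exact congrArg (b • ·) (hmain.trans (Module.End.one_apply _).symm)
  · intro h
    have h2 := hT2 (1, 0)
    rw [h, Module.End.one_apply] at h2
    have h3 := congrArg (fun f : AddMonoidAlgebra ℂ (ℤ × ℤ) => f.coeff (1, 0)) h2
    simp [AddMonoidAlgebra.coeff_single, Finsupp.single_eq_same] at h3
    norm_num at h3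
end
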